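/- Let n ≥ 2 be an integer, r > 0, and f : [0,r] → ℝ a C² function with f(0) = 0, f'(0) = 1, and f(t) > 0 for all t ∈ (0,r]. Let λ ∈ ℝ and let φ : [0,r] → ℝ be a radial first eigenfunction with eigenvalue λ, i.e. φ is C² on [0,r], φ(t) > 0 for t ∈ [0,r), φ(r) = 0, φ'(0) = 0, and φ''(t) + (n−1)(f'(t)/f(t))φ'(t) + λφ(t) = 0 on (0,r). Let u : [0,r] → ℝ be continuous with u ≥ 0 and not identically zero, and suppose C ∈ ℝ satisfies u(t) ≤ C·T(u)(t) for all t ∈ [0,r]. Then λ ≤ C. (Equivalently, λ ≤ sup over t ∈ [0,r) of the quotient h(t,u) = u(t)/T(u)(t).) -/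

import Mathlib

open Set intervalIntegral MeasureTheory

/-- The operator `T` from Barroso–Bessa: `T u t = ∫_t^r f(σ)^{-(n-1)} ∫_0^σ f(s)^{n-1} u(s) ds dσ`. -/
noncomputable def BBop (n : ℕ) (r : ℝ) (f u : ℝ → ℝ) (t : ℝ) : ℝ :=
  ∫ σ in t..r, (1 / f σ ^ (n - 1)) * ∫ s in (0:ℝ)..σ, f s ^ (n - 1) * u s

set_option maxHeartbeats 2000000 in
/-- Upper-bound half of Theorem 1: if `φ` is a positive radial first eigenfunction with
eigenvalue `λ`, and `u ≥ 0` not identically zero satisfies `u ≤ C · T(u)` on `[0,r]`,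
then `λ ≤ C`. -/
theorem stmt5 (n : ℕ) (hn : 2 ≤ n) (r : ℝ) (hr : 0 < r)
    (f : ℝ → ℝ) (hf : ContDiffOn ℝ 2 f (Set.Icc 0 r))
    (hf0 : f 0 = 0) (hf'0 : derivWithin f (Set.Icc 0 r) 0 = 1)
    (hfpos : ∀ t ∈ Set.Ioc (0:ℝ) r, 0 < f t)
    (lam : ℝ) (φ : ℝ → ℝ) (hφ : ContDiffOn ℝ 2 φ (Set.Icc 0 r))
    (hφpos : ∀ t ∈ Set.Ico (0:ℝ) r, 0 < φ t) (hφr : φ r = 0)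
    (hφ'0 : derivWithin φ (Set.Icc 0 r) 0 = 0)
    (hφode : ∀ t ∈ Set.Ioo (0:ℝ) r,
      deriv (deriv φ) t + ((n : ℝ) - 1) * (deriv f t / f t) * deriv φ t + lam * φ t = 0)
    (u : ℝ → ℝ) (hu : ContinuousOn u (Set.Icc 0 r))
    (hunonneg : ∀ t ∈ Set.Icc (0:ℝ) r, 0 ≤ u t)
    (hune : ∃ t ∈ Set.Icc (0:ℝ) r, u t ≠ 0)
    (C : ℝ) (hC : ∀ t ∈ Set.Icc (0:ℝ) r, u t ≤ C * BBop n r f u t) :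
    lam ≤ C := by
  have hr' : (0:ℝ) ≤ r := hr.le
  have hk1 : 1 ≤ n - 1 := by omega
  have hkne : n - 1 ≠ 0 := by omega
  have hfc : ContinuousOn f (Set.Icc 0 r) := hf.continuousOn
  have hφc : ContinuousOn φ (Set.Icc 0 r) := hφ.continuousOn
  have hudiff : UniqueDiffOn ℝ (Set.Icc (0:ℝ) r) := uniqueDiffOn_Icc hr
  set P : ℝ → ℝ := derivWithin φ (Set.Icc 0 r) with hPdef
  have hPc : ContinuousOn P (Set.Icc 0 r) :=
    hφ.continuousOn_derivWithin hudiff one_le_two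
  have hPd : DifferentiableOn ℝ P (Set.Icc 0 r) :=
    (hφ.derivWithin (m := 1) hudiff (by norm_num)).differentiableOn one_ne_zero
  have hφd : DifferentiableOn ℝ φ (Set.Icc 0 r) := hφ.differentiableOn two_ne_zero
  have hfd : DifferentiableOn ℝ f (Set.Icc 0 r) := hf.differentiableOn two_ne_zero
  -- generic: derivatives within Icc are honest derivatives on the interior
  have hderiv_of : ∀ (w : ℝ → ℝ), DifferentiableOn ℝ w (Set.Icc 0 r) →
      ∀ t ∈ Set.Ioo (0:ℝ) r, HasDerivAt w (derivWithin w (Set.Icc 0 r) t) t := by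
    intro w hw t ht
    have hmem : Set.Icc (0:ℝ) r ∈ nhds t := Icc_mem_nhds ht.1 ht.2
    have h1 := (hw t (Set.Ioo_subset_Icc_self ht)).differentiableAt hmem
    rw [derivWithin_of_mem_nhds hmem]
    exact h1.hasDerivAt
  -- nonnegativity of f and φ
  have hfnn : ∀ s ∈ Set.Icc (0:ℝ) r, 0 ≤ f s := by
    intro s hs
    rcases eq_or_lt_of_le hs.1 with h | h
    · rw [← h, hf0]
    · exact (hfpos s ⟨h, hs.2⟩).le
  have hφnn : ∀ s ∈ Set.Icc (0:ℝ) r, 0 ≤ φ s := by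
    intro s hs
    rcases eq_or_lt_of_le hs.2 with h | h
    · rw [h, hφr]
    · exact (hφpos s ⟨hs.1, h⟩).le
  have hg0 : f 0 ^ (n - 1) = 0 := by rw [hf0]; exact zero_pow hkne
  -- the integrand quotients
  set Fφ : ℝ → ℝ := fun σ => (1 / f σ ^ (n - 1)) * ∫ s in (0:ℝ)..σ, f s ^ (n - 1) * φ s
    with hFφdef
  set Fu : ℝ → ℝ := fun σ => (1 / f σ ^ (n - 1)) * ∫ s in (0:ℝ)..σ, f s ^ (n - 1) * u s
    with hFudef
  have hBφ : ∀ t, BBop n r f φ t = ∫ σ in t..r, Fφ σ := fun t => rfl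
  have hBu : ∀ t, BBop n r f u t = ∫ t in t..r, Fu t := fun t => rfl
  -- integrability of inner integrands
  have hinner_int : ∀ (v : ℝ → ℝ), ContinuousOn v (Set.Icc 0 r) →
      ∀ a b, a ∈ Set.Icc (0:ℝ) r → b ∈ Set.Icc (0:ℝ) r →
      IntervalIntegrable (fun s => f s ^ (n - 1) * v s) volume a b := by
    intro v hv a b ha hb
    apply ContinuousOn.intervalIntegrable
    apply ((hfc.pow _).mul hv).mono
    exact Set.uIcc_subset_Icc ha hb
  -- nonnegativity of inner integrals for nonneg integrands
  have hinner_nonneg : ∀ (v : ℝ → ℝ), (∀ s ∈ Set.Icc (0:ℝ) r, 0 ≤ v s) →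
      ∀ a b, (0:ℝ) ≤ a → a ≤ b → b ≤ r →
      0 ≤ ∫ s in a..b, f s ^ (n - 1) * v s := by
    intro v hv a b ha hab hbr
    apply intervalIntegral.integral_nonneg hab
    intro s hs
    have hs' : s ∈ Set.Icc (0:ℝ) r := ⟨ha.trans hs.1, hs.2.trans hbr⟩
    exact mul_nonneg (pow_nonneg (hfnn s hs') _) (hv s hs')
  have hFφ_nonneg : ∀ σ ∈ Set.Icc (0:ℝ) r, 0 ≤ Fφ σ := by
    intro σ hσ
    exact mul_nonneg (one_div_nonneg.mpr (pow_nonneg (hfnn σ hσ) _))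
      (hinner_nonneg φ hφnn 0 σ le_rfl hσ.1 hσ.2)
  have hFu_nonneg : ∀ σ ∈ Set.Icc (0:ℝ) r, 0 ≤ Fu σ := by
    intro σ hσ
    exact mul_nonneg (one_div_nonneg.mpr (pow_nonneg (hfnn σ hσ) _))
      (hinner_nonneg u hunonneg 0 σ le_rfl hσ.1 hσ.2)
  -- Step C: the eigenfunction identity φ = lam · T φ
  set F' : ℝ → ℝ := derivWithin f (Set.Icc 0 r) with hF'def
  set Q : ℝ → ℝ := derivWithin P (Set.Icc 0 r) with hQdef
  have hG : ∀ σ ∈ Set.Ioo (0:ℝ) r,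
      HasDerivAt (fun x => f x ^ (n - 1) * P x) (-(lam * (f σ ^ (n - 1) * φ σ))) σ := by
    intro σ hσ
    have hfσ : 0 < f σ := hfpos σ ⟨hσ.1, hσ.2.le⟩
    have h1 : HasDerivAt f (F' σ) σ := hderiv_of f hfd σ hσ
    have h2 : HasDerivAt P (Q σ) σ := hderiv_of P hPd σ hσ
    have h3 : HasDerivAt (fun x => f x ^ (n - 1) * P x) _ σ := (h1.pow (n - 1)).mul h2
    simp only [Pi.pow_apply] at h3
    convert h3 using 1
    have hmem : Set.Icc (0:ℝ) r ∈ nhds σ := Icc_mem_nhds hσ.1 hσ.2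
    have hode := hφode σ hσ
    have e1 : deriv φ σ = P σ := (derivWithin_of_mem_nhds hmem).symm
    have e3 : deriv f σ = F' σ := (derivWithin_of_mem_nhds hmem).symm
    have e2 : deriv (deriv φ) σ = Q σ := by
      have hev : deriv φ =ᶠ[nhds σ] P := by
        filter_upwards [IsOpen.mem_nhds isOpen_Ioo hσ] with x hx
        exact (derivWithin_of_mem_nhds (Icc_mem_nhds hx.1 hx.2)).symm
      rw [hev.deriv_eq]
      exact (derivWithin_of_mem_nhds hmem).symm
    rw [e1, e2, e3] at hode
    have hQσ : Q σ = -(((n:ℝ) - 1) * (F' σ / f σ) * P σ + lam * φ σ) := by linarith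
    have hcast : ((n - 1 : ℕ) : ℝ) = (n:ℝ) - 1 := by
      have : (1:ℕ) ≤ n := by omega
      push_cast [this]; ring
    have hpow : f σ ^ (n - 1) = f σ ^ (n - 1 - 1) * f σ := by
      rw [← pow_succ]; congr 1; omega
    rw [hQσ, hcast, hpow]
    field_simp
    ring
  have hGcont : ContinuousOn (fun x => f x ^ (n - 1) * P x) (Set.Icc 0 r) :=
    (hfc.pow _).mul hPc
  have hGid : ∀ σ ∈ Set.Ioc (0:ℝ) r,
      f σ ^ (n - 1) * P σ = -(lam * ∫ s in (0:ℝ)..σ, f s ^ (n - 1) * φ s) := by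
    intro σ hσ
    have hσr : σ ∈ Set.Icc (0:ℝ) r := ⟨hσ.1.le, hσ.2⟩
    have hsub : Set.Icc (0:ℝ) σ ⊆ Set.Icc (0:ℝ) r := Set.Icc_subset_Icc le_rfl hσ.2
    have hint : IntervalIntegrable (fun s => -(lam * (f s ^ (n - 1) * φ s))) volume 0 σ := by
      apply ContinuousOn.intervalIntegrable
      apply ContinuousOn.neg
      apply (continuousOn_const.mul ((hfc.pow _).mul hφc)).mono
      rwa [Set.uIcc_of_le hσ.1.le]
    have hftc := intervalIntegral.integral_eq_sub_of_hasDeriv_right_of_le hσ.1.le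
      (hGcont.mono hsub)
      (fun x hx => (hG x ⟨hx.1, hx.2.trans_le hσ.2⟩).hasDerivWithinAt) hint
    have hzero : f 0 ^ (n - 1) * P 0 = 0 := by rw [hg0, zero_mul]
    rw [hzero, sub_zero] at hftc
    rw [← hftc]
    rw [intervalIntegral.integral_neg, ← intervalIntegral.integral_const_mul]
  have hPeq : ∀ σ ∈ Set.Icc (0:ℝ) r, P σ = -(lam * Fφ σ) := by
    intro σ hσ
    rcases eq_or_lt_of_le hσ.1 with h | h
    · rw [← h]
      rw [hPdef] at hφ'0 ⊢
      rw [hφ'0, hFφdef]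
      simp
    · have hGσ := hGid σ ⟨h, hσ.2⟩
      have hfσ : f σ ^ (n - 1) ≠ 0 := by
        exact pow_ne_zero _ (ne_of_gt (hfpos σ ⟨h, hσ.2⟩))
      rw [hFφdef]
      field_simp
      linarith [hGσ]
  have hφT : ∀ t ∈ Set.Icc (0:ℝ) r, φ t = lam * BBop n r f φ t := by
    intro t ht
    have hPint : IntervalIntegrable P volume t r := by
      apply ContinuousOn.intervalIntegrable
      apply hPc.mono
      rw [Set.uIcc_of_le ht.2]
      exact Set.Icc_subset_Icc ht.1 le_rfl
    have h1 : ∫ σ in t..r, P σ = φ r - φ t := by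
      apply intervalIntegral.integral_eq_sub_of_hasDeriv_right_of_le ht.2
        (hφc.mono (Set.Icc_subset_Icc ht.1 le_rfl))
      · intro x hx
        exact (hderiv_of φ hφd x ⟨lt_of_le_of_lt ht.1 hx.1, hx.2⟩).hasDerivWithinAt
      · exact hPint
    have h2 : ∫ σ in t..r, P σ = ∫ σ in t..r, -(lam * Fφ σ) := by
      apply intervalIntegral.integral_congr
      intro σ hσ
      rw [Set.uIcc_of_le ht.2] at hσ
      exact hPeq σ ⟨ht.1.trans hσ.1, hσ.2⟩
    rw [h2] at h1
    rw [intervalIntegral.integral_neg, intervalIntegral.integral_const_mul, hφr] at h1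
    rw [hBφ]
    linarith
  -- lam > 0
  have hφ0 : 0 < φ 0 := hφpos 0 ⟨le_rfl, hr⟩
  have hT0 : 0 ≤ BBop n r f φ 0 := by
    rw [hBφ]
    exact intervalIntegral.integral_nonneg hr' (fun σ hσ => hFφ_nonneg σ hσ)
  have hlam : 0 < lam := by
    by_contra h
    push_neg at h
    have h1 := hφT 0 ⟨le_rfl, hr'⟩
    nlinarith
  -- C > 0
  obtain ⟨t0, ht0, hu0⟩ := hune
  have hu0' : 0 < u t0 := lt_of_le_of_ne (hunonneg t0 ht0) (Ne.symm hu0)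
  have hTu_nonneg : ∀ t ∈ Set.Icc (0:ℝ) r, 0 ≤ BBop n r f u t := by
    intro t ht
    rw [hBu]
    exact intervalIntegral.integral_nonneg ht.2
      (fun σ hσ => hFu_nonneg σ ⟨ht.1.trans hσ.1, hσ.2⟩)
  have hCpos : 0 < C := by
    by_contra h
    push_neg at h
    have h1 := hC t0 ht0
    nlinarith [hTu_nonneg t0 ht0]
  -- integrability of Fφ
  have hFφ_int : ∀ t ∈ Set.Icc (0:ℝ) r, IntervalIntegrable Fφ volume t r := by
    intro t ht
    have h1 : IntervalIntegrable (fun σ => (-1 / lam) * P σ) volume t r := by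
      apply ContinuousOn.intervalIntegrable
      apply (continuousOn_const.mul hPc).mono
      rw [Set.uIcc_of_le ht.2]
      exact Set.Icc_subset_Icc ht.1 le_rfl
    rw [intervalIntegrable_iff_integrableOn_Ioc_of_le ht.2] at h1 ⊢
    apply h1.congr_fun _ measurableSet_Ioc
    intro σ hσ
    have hσ' : σ ∈ Set.Icc (0:ℝ) r := ⟨ht.1.trans hσ.1.le, hσ.2⟩
    have := hPeq σ hσ'
    field_simp [this]
    linarith
  -- continuity of the primitive of the inner integrand
  have hprim_cont : ∀ (v : ℝ → ℝ), ContinuousOn v (Set.Icc 0 r) →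
      ContinuousOn (fun σ => ∫ s in (0:ℝ)..σ, f s ^ (n - 1) * v s) (Set.Icc 0 r) := by
    intro v hv
    have h1 : IntegrableOn (fun s => f s ^ (n - 1) * v s) (Set.uIcc 0 r) volume := by
      rw [Set.uIcc_of_le hr']
      exact ((hfc.pow _).mul hv).integrableOn_Icc
    have := intervalIntegral.continuousOn_primitive_interval h1
    rwa [Set.uIcc_of_le hr'] at this
  have hIu_cont := hprim_cont u hu
  -- Fu is continuous away from 0
  have hFu_cont : ContinuousOn Fu (Set.Ioc 0 r) := by
    rw [hFudef]
    apply ContinuousOn.mul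
    · apply ContinuousOn.div continuousOn_const
      · exact (hfc.mono Set.Ioc_subset_Icc_self).pow _
      · intro x hx
        exact pow_ne_zero _ (ne_of_gt (hfpos x hx))
    · exact hIu_cont.mono Set.Ioc_subset_Icc_self
  -- monotonicity of T
  have key : ∀ (A : ℝ), 0 ≤ A → (∀ s ∈ Set.Icc (0:ℝ) r, u s ≤ A * φ s) →
      ∀ t ∈ Set.Icc (0:ℝ) r, BBop n r f u t ≤ A * BBop n r f φ t := by
    intro A hA hle t ht
    have hpt : ∀ σ ∈ Set.Icc (0:ℝ) r, Fu σ ≤ A * Fφ σ := by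
      intro σ hσ
      have hIle : (∫ s in (0:ℝ)..σ, f s ^ (n - 1) * u s)
          ≤ ∫ s in (0:ℝ)..σ, A * (f s ^ (n - 1) * φ s) := by
        apply intervalIntegral.integral_mono_on hσ.1
          (hinner_int u hu 0 σ ⟨le_rfl, hr'⟩ hσ)
        · exact ((hinner_int φ hφc 0 σ ⟨le_rfl, hr'⟩ hσ).const_mul A)
        · intro s hs
          have hs' : s ∈ Set.Icc (0:ℝ) r := ⟨hs.1, hs.2.trans hσ.2⟩
          have := mul_le_mul_of_nonneg_left (hle s hs') (pow_nonneg (hfnn s hs') (n-1))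
          calc f s ^ (n - 1) * u s ≤ f s ^ (n - 1) * (A * φ s) := this
            _ = A * (f s ^ (n - 1) * φ s) := by ring
      rw [intervalIntegral.integral_const_mul] at hIle
      have h1 : (0:ℝ) ≤ 1 / f σ ^ (n - 1) := one_div_nonneg.mpr (pow_nonneg (hfnn σ hσ) _)
      calc Fu σ = (1 / f σ ^ (n - 1)) * ∫ s in (0:ℝ)..σ, f s ^ (n - 1) * u s := rfl
        _ ≤ (1 / f σ ^ (n - 1)) * (A * ∫ s in (0:ℝ)..σ, f s ^ (n - 1) * φ s) :=
          mul_le_mul_of_nonneg_left hIle h1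
        _ = A * Fφ σ := by rw [hFφdef]; ring
    have hFu_int : IntervalIntegrable Fu volume t r := by
      rw [intervalIntegrable_iff_integrableOn_Ioc_of_le ht.2]
      have hdom : IntegrableOn (fun σ => A * Fφ σ) (Set.Ioc t r) volume := by
        have := (hFφ_int t ht).const_mul A
        rwa [intervalIntegrable_iff_integrableOn_Ioc_of_le ht.2] at this
      apply hdom.mono'
      · apply (hFu_cont.mono _).aestronglyMeasurable measurableSet_Ioc
        exact Set.Ioc_subset_Ioc ht.1 le_rfl
      · apply ae_restrict_of_forall_mem measurableSet_Ioc
        intro σ hσ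
        have hσ' : σ ∈ Set.Icc (0:ℝ) r := ⟨ht.1.trans hσ.1.le, hσ.2⟩
        rw [Real.norm_eq_abs, abs_of_nonneg (hFu_nonneg σ hσ')]
        exact hpt σ hσ'
    rw [hBu, hBφ, ← intervalIntegral.integral_const_mul]
    apply intervalIntegral.integral_mono_on ht.2 hFu_int ((hFφ_int t ht).const_mul A)
    intro σ hσ
    exact hpt σ ⟨ht.1.trans hσ.1, hσ.2⟩
  -- Step E: an initial comparison constant u ≤ A φ
  obtain ⟨Mu, hMu⟩ := isCompact_Icc.exists_bound_of_continuousOn hu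
  obtain ⟨Mf, hMf⟩ := isCompact_Icc.exists_bound_of_continuousOn hfc
  have hMu0 : 0 ≤ Mu := le_trans (norm_nonneg _) (hMu t0 ht0)
  have hMfr : ∀ s ∈ Set.Icc (0:ℝ) r, f s ≤ Mf :=
    fun s hs => le_trans (le_abs_self _) (hMf s hs)
  have hMf0 : 0 < Mf := lt_of_lt_of_le (hfpos r ⟨hr, le_rfl⟩) (hMfr r ⟨hr', le_rfl⟩)
  have hhalf0 : (0:ℝ) ≤ r / 2 := by linarith
  have hhalfr : r / 2 ≤ r := by linarith
  have hhalf : (0:ℝ) < r / 2 := by linarith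
  obtain ⟨x0, hx0, hmin⟩ := isCompact_Icc.exists_isMinOn (Set.nonempty_Icc.mpr hhalf0)
    (hφc.mono (Set.Icc_subset_Icc le_rfl hhalfr))
  have hm : 0 < φ x0 := hφpos x0 ⟨hx0.1, lt_of_le_of_lt hx0.2 (by linarith)⟩
  obtain ⟨x1, hx1, hminf⟩ := isCompact_Icc.exists_isMinOn
    (Set.nonempty_Icc.mpr hhalfr) (hfc.mono (Set.Icc_subset_Icc hhalf0 le_rfl))
  have hmf : 0 < f x1 := hfpos x1 ⟨lt_of_lt_of_le hhalf hx1.1, hx1.2⟩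
  set K : ℝ := (1 / f x1 ^ (n - 1)) * (Mf ^ (n - 1) * Mu * r) with hKdef
  have hK0 : 0 ≤ K := by
    apply mul_nonneg (one_div_nonneg.mpr (pow_nonneg hmf.le _))
    have := pow_nonneg hMf0.le (n - 1)
    positivity
  have hFuK : ∀ σ ∈ Set.Icc (r/2) r, Fu σ ≤ K := by
    intro σ hσ
    have hσ' : σ ∈ Set.Icc (0:ℝ) r := ⟨hhalf0.trans hσ.1, hσ.2⟩
    have hIu : (∫ s in (0:ℝ)..σ, f s ^ (n - 1) * u s) ≤ Mf ^ (n - 1) * Mu * r := by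
      have h1 : (∫ s in (0:ℝ)..σ, f s ^ (n - 1) * u s)
          ≤ ∫ _ in (0:ℝ)..σ, Mf ^ (n - 1) * Mu := by
        apply intervalIntegral.integral_mono_on hσ'.1
          (hinner_int u hu 0 σ ⟨le_rfl, hr'⟩ hσ') intervalIntegrable_const
        intro s hs
        have hs' : s ∈ Set.Icc (0:ℝ) r := ⟨hs.1, hs.2.trans hσ'.2⟩
        apply mul_le_mul (pow_le_pow_left₀ (hfnn s hs') (hMfr s hs') _)
          (le_trans (le_abs_self _) (hMu s hs')) (hunonneg s hs')
          (pow_nonneg hMf0.le _)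
      rw [intervalIntegral.integral_const, smul_eq_mul, sub_zero] at h1
      calc (∫ s in (0:ℝ)..σ, f s ^ (n - 1) * u s) ≤ σ * (Mf ^ (n-1) * Mu) := h1
        _ ≤ Mf ^ (n-1) * Mu * r := by nlinarith [mul_nonneg (pow_nonneg hMf0.le (n-1)) hMu0, hσ'.2, hσ'.1]
    have hfx1 : f x1 ≤ f σ := hminf hσ
    have h2 : 1 / f σ ^ (n - 1) ≤ 1 / f x1 ^ (n - 1) := by
      apply one_div_le_one_div_of_le (pow_pos hmf _)
      exact pow_le_pow_left₀ hmf.le hfx1 _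
    calc Fu σ = (1 / f σ ^ (n - 1)) * ∫ s in (0:ℝ)..σ, f s ^ (n - 1) * u s := rfl
      _ ≤ (1 / f x1 ^ (n - 1)) * (Mf ^ (n - 1) * Mu * r) := by
          apply mul_le_mul h2 hIu (hinner_nonneg u hunonneg 0 σ le_rfl hσ'.1 hσ'.2)
            (one_div_nonneg.mpr (pow_nonneg hmf.le _))
      _ = K := rfl
  have hTuK : ∀ t ∈ Set.Icc (r/2) r, BBop n r f u t ≤ K * (r - t) := by
    intro t ht
    have ht' : t ∈ Set.Icc (0:ℝ) r := ⟨hhalf0.trans ht.1, ht.2⟩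
    have hFu_int : IntervalIntegrable Fu volume t r := by
      apply ContinuousOn.intervalIntegrable
      apply hFu_cont.mono
      rw [Set.uIcc_of_le ht.2]
      intro x hx
      exact ⟨lt_of_lt_of_le hhalf (ht.1.trans hx.1), hx.2⟩
    have h1 : (∫ σ in t..r, Fu σ) ≤ ∫ _ in t..r, K := by
      apply intervalIntegral.integral_mono_on ht.2 hFu_int intervalIntegrable_const
      intro σ hσ
      exact hFuK σ ⟨ht.1.trans hσ.1, hσ.2⟩
    rw [intervalIntegral.integral_const, smul_eq_mul] at h1
    rw [hBu]
    calc (∫ σ in t..r, Fu σ) ≤ (r - t) * K := h1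
      _ = K * (r - t) := by ring
  -- lower bound for Fφ on [r/2, r]
  set c' : ℝ := (1 / Mf ^ (n - 1)) * ∫ s in (0:ℝ)..(r/2), f s ^ (n - 1) * φ s with hc'def
  have hIφhalf : 0 < ∫ s in (0:ℝ)..(r/2), f s ^ (n - 1) * φ s := by
    apply intervalIntegral.intervalIntegral_pos_of_pos_on
      (hinner_int φ hφc 0 (r/2) ⟨le_rfl, hr'⟩ ⟨hhalf0, hhalfr⟩) _ hhalf
    intro x hx
    have hx1' : 0 < f x := hfpos x ⟨hx.1, (hx.2.le.trans hhalfr)⟩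
    have hx2' : 0 < φ x := hφpos x ⟨hx.1.le, lt_of_lt_of_le hx.2 hhalfr⟩
    exact mul_pos (pow_pos hx1' _) hx2'
  have hc' : 0 < c' :=
    mul_pos (one_div_pos.mpr (pow_pos hMf0 _)) hIφhalf
  have hFφc' : ∀ σ ∈ Set.Icc (r/2) r, c' ≤ Fφ σ := by
    intro σ hσ
    have hσ' : σ ∈ Set.Icc (0:ℝ) r := ⟨hhalf0.trans hσ.1, hσ.2⟩
    have hadd := intervalIntegral.integral_add_adjacent_intervals
      (hinner_int φ hφc 0 (r/2) ⟨le_rfl, hr'⟩ ⟨hhalf0, hhalfr⟩)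
      (hinner_int φ hφc (r/2) σ ⟨hhalf0, hhalfr⟩ hσ')
    have h2 : 0 ≤ ∫ s in (r/2)..σ, f s ^ (n - 1) * φ s :=
      hinner_nonneg φ hφnn (r/2) σ hhalf0 hσ.1 hσ.2
    have hIφσ : (∫ s in (0:ℝ)..(r/2), f s ^ (n - 1) * φ s)
        ≤ ∫ s in (0:ℝ)..σ, f s ^ (n - 1) * φ s := by
      rw [← hadd]; linarith
    have hfσ : 0 < f σ := hfpos σ ⟨lt_of_lt_of_le hhalf hσ.1, hσ.2⟩
    have h3 : 1 / Mf ^ (n - 1) ≤ 1 / f σ ^ (n - 1) := by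
      apply one_div_le_one_div_of_le (pow_pos hfσ _)
      exact pow_le_pow_left₀ (hfnn σ hσ') (hMfr σ hσ') _
    calc c' = (1 / Mf ^ (n - 1)) * ∫ s in (0:ℝ)..(r/2), f s ^ (n - 1) * φ s := rfl
      _ ≤ (1 / f σ ^ (n - 1)) * ∫ s in (0:ℝ)..σ, f s ^ (n - 1) * φ s :=
        mul_le_mul h3 hIφσ hIφhalf.le (one_div_nonneg.mpr (pow_nonneg (hfnn σ hσ') _))
      _ = Fφ σ := rfl
  have hφlow : ∀ t ∈ Set.Icc (r/2) r, lam * (c' * (r - t)) ≤ φ t := by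
    intro t ht
    have ht' : t ∈ Set.Icc (0:ℝ) r := ⟨hhalf0.trans ht.1, ht.2⟩
    have h1 : (∫ _ in t..r, c') ≤ ∫ σ in t..r, Fφ σ := by
      apply intervalIntegral.integral_mono_on ht.2 intervalIntegrable_const
        (hFφ_int t ht')
      intro σ hσ
      exact hFφc' σ ⟨ht.1.trans hσ.1, hσ.2⟩
    rw [intervalIntegral.integral_const, smul_eq_mul] at h1
    have h2 := hφT t ht'
    rw [hBφ] at h2
    rw [h2]
    have := mul_le_mul_of_nonneg_left h1 hlam.le
    calc lam * (c' * (r - t)) = lam * ((r - t) * c') := by ring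
      _ ≤ lam * ∫ σ in t..r, Fφ σ := this
  -- assemble A
  set A : ℝ := max (Mu / φ x0) (C * K / (lam * c')) with hAdef
  have hA20 : 0 ≤ C * K / (lam * c') :=
    div_nonneg (mul_nonneg hCpos.le hK0) (mul_pos hlam hc').le
  have hA0 : 0 ≤ A := le_trans hA20 (le_max_right _ _)
  have hAbound : ∀ t ∈ Set.Icc (0:ℝ) r, u t ≤ A * φ t := by
    intro t ht
    rcases le_total t (r/2) with h | h
    · have hφt : φ x0 ≤ φ t := hmin ⟨ht.1, h⟩
      have h1 : u t ≤ Mu := le_trans (le_abs_self _) (hMu t ht)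
      have h2 : Mu ≤ (Mu / φ x0) * φ t := by
        rw [div_mul_eq_mul_div, le_div_iff₀ hm]
        nlinarith
      have h3 : (Mu / φ x0) * φ t ≤ A * φ t :=
        mul_le_mul_of_nonneg_right (le_max_left _ _) (hφnn t ht)
      linarith
    · have h1 := hC t ht
      have h2 := hTuK t ⟨h, ht.2⟩
      have h3 := hφlow t ⟨h, ht.2⟩
      have h4 : u t ≤ C * (K * (r - t)) := by
        calc u t ≤ C * BBop n r f u t := h1
          _ ≤ C * (K * (r - t)) := mul_le_mul_of_nonneg_left h2 hCpos.le
      have h5 : C * (K * (r - t)) = (C * K / (lam * c')) * (lam * (c' * (r - t))) := by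
        have hc'0 : c' ≠ 0 := ne_of_gt hc'
        have hlam0 : lam ≠ 0 := ne_of_gt hlam
        field_simp
      calc u t ≤ (C * K / (lam * c')) * (lam * (c' * (r - t))) := by rw [← h5]; exact h4
        _ ≤ (C * K / (lam * c')) * φ t := mul_le_mul_of_nonneg_left h3 hA20
        _ ≤ A * φ t := mul_le_mul_of_nonneg_right (le_max_right _ _) (hφnn t ht)
  -- Step F: infimum argument
  set S : Set ℝ := {a : ℝ | 0 ≤ a ∧ ∀ t ∈ Set.Icc (0:ℝ) r, u t ≤ a * φ t} with hSdef
  have hSA : A ∈ S := ⟨hA0, hAbound⟩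
  have hSbdd : BddBelow S := ⟨0, fun a ha => ha.1⟩
  set As : ℝ := sInf S with hAsdef
  have hAs0 : 0 ≤ As := le_csInf ⟨A, hSA⟩ (fun a ha => ha.1)
  have hAsmem : ∀ t ∈ Set.Icc (0:ℝ) r, u t ≤ As * φ t := by
    intro t ht
    rcases eq_or_lt_of_le (hφnn t ht) with h | h
    · have h1 := hSA.2 t ht
      rw [← h, mul_zero] at h1 ⊢
      exact h1
    · have h1 : u t / φ t ≤ As := by
        apply le_csInf ⟨A, hSA⟩
        intro a ha
        rw [div_le_iff₀ h]
        exact ha.2 t ht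
      calc u t = (u t / φ t) * φ t := by field_simp
        _ ≤ As * φ t := mul_le_mul_of_nonneg_right h1 h.le
  have hAspos : 0 < As := by
    rcases eq_or_lt_of_le hAs0 with h | h
    · exfalso
      have h1 := hAsmem t0 ht0
      rw [← h, zero_mul] at h1
      exact absurd h1 (not_le.mpr hu0')
    · exact h
  have hlam0 : lam ≠ 0 := ne_of_gt hlam
  have hfield : ∀ a b : ℝ, C * (a * b) = (C * a / lam) * (lam * b) := by
    intro a b
    field_simp
  have hstep : As ≤ C * As / lam := by
    have h1 : ∀ t ∈ Set.Icc (0:ℝ) r, u t ≤ (C * As / lam) * φ t := by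
      intro t ht
      have h2 := key As hAs0 hAsmem t ht
      have h3 : φ t = lam * BBop n r f φ t := hφT t ht
      calc u t ≤ C * BBop n r f u t := hC t ht
        _ ≤ C * (As * BBop n r f φ t) := mul_le_mul_of_nonneg_left h2 hCpos.le
        _ = (C * As / lam) * (lam * BBop n r f φ t) := hfield As (BBop n r f φ t)
        _ = (C * As / lam) * φ t := by rw [← h3]
    apply csInf_le hSbdd
    exact ⟨div_nonneg (mul_nonneg hCpos.le hAs0) hlam.le, h1⟩
  rw [le_div_iff₀ hlam, mul_comm As lam] at hstep
  exact (mul_le_mul_iff_of_pos_right hAspos).mp hstep
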